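/- arXiv:1401.1442 — 2 statements merged into one kernel-verified Lean document; each statement's English description precedes it below -/
import Mathlib

section
/- Conditional law given the site occupation numbers (Proposition 2.2(a)): assume θ_1 > 0 (so h_m > 0 for all m). For an integer partition λ of m define ν_m(λ) = (1/h_m)·∏_{j≥1} (1/ρ_j(λ)!)·(θ_j/j)^{ρ_j(λ)}. Let η : ℤ^d → ℕ be finitely supported with Σ_x η_x = n and suppose P_{L,n}({r : η_x(r) = η_x for all x}) > 0. Then for every r ∈ Λ_n with η_x(r) = η_x for all x, the conditional probability P_{L,n}({r} | {r' : η_x(r') = η_x for all x}) equals ∏_{x∈ℤ^d} ν_{η_x}((r_{x,j})_{j≥1}), where (r_{x,j})_{j≥1} is viewed as the integer partition of η_x with r_{x,j} parts equal to j. -/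
open scoped BigOperators ENNReal NNReal
open Filter MeasureTheory

namespace Spart

/-- `exp(-t)` for an extended-real `t`, with `exp(-∞) = 0`. -/
noncomputable def expNeg (t : ℝ≥0∞) : ℝ := if t = ∞ then 0 else Real.exp (-t.toReal)

/-- Sites of the lattice `ℤ^d`. -/
abbrev Site (d : ℕ) := Fin d → ℤ

/-- A spatial partition: a finitely supported family `(r_{x,j})` of natural numbers.
(Only indices `j ≥ 1` are meaningful; configurations are supported on `j ≥ 1`.) -/
abbrev Config (d : ℕ) := (Site d × ℕ) →₀ ℕ

/-- The rescaled site `x/L ∈ ℝ^d`. -/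
noncomputable def scaledSite {d : ℕ} (x : Site d) (L : ℝ) : Fin d → ℝ :=
  fun i => (x i : ℝ) / L

/-- Site occupation number `η_x(r) = Σ_j j r_{x,j}`. -/
noncomputable def siteOcc {d : ℕ} (r : Config d) (x : Site d) : ℕ :=
  ∑ p ∈ r.support, if p.1 = x then p.2 * r p else 0

/-- Component counts `r_j(r) = Σ_x r_{x,j}`. -/
noncomputable def compCount {d : ℕ} (r : Config d) (j : ℕ) : ℕ :=
  ∑ p ∈ r.support, if p.2 = j then r p else 0

/-- Total mass `Σ_{x,j} j r_{x,j}`. -/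
noncomputable def mass {d : ℕ} (r : Config d) : ℕ :=
  ∑ p ∈ r.support, p.2 * r p

/-- The (unnormalized) weight of a spatial partition. -/
noncomputable def W {d : ℕ} (V : (Fin d → ℝ) → ℝ≥0∞) (θ : ℕ → ℝ) (L : ℝ) (r : Config d) : ℝ :=
  ∏ p ∈ r.support,
    (1 / (Nat.factorial (r p)) : ℝ) *
      ((θ p.2 / (p.2 : ℝ)) * expNeg ((p.2 : ℝ≥0∞) * V (scaledSite p.1 L))) ^ (r p)

/-- The canonical partition function `Z_{L,n}`. -/
noncomputable def Z {d : ℕ} (V : (Fin d → ℝ) → ℝ≥0∞) (θ : ℕ → ℝ) (L : ℝ) (n : ℕ) : ℝ :=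
  ∑' r : {r : Config d // mass r = n}, W V θ L (r : Config d)

/-- The probability of an event under the canonical measure `P_{L,n}`. -/
noncomputable def P {d : ℕ} (V : (Fin d → ℝ) → ℝ≥0∞) (θ : ℕ → ℝ) (L : ℝ) (n : ℕ)
    (E : Set (Config d)) : ℝ :=
  (∑' r : {r : Config d // mass r = n ∧ r ∈ E}, W V θ L (r : Config d)) / Z V θ L n

/-- Expectation of an observable under the canonical measure `P_{L,n}`. -/
noncomputable def Ex {d : ℕ} (V : (Fin d → ℝ) → ℝ≥0∞) (θ : ℕ → ℝ) (L : ℝ) (n : ℕ)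
    (f : Config d → ℝ) : ℝ :=
  (∑' r : {r : Config d // mass r = n}, f (r : Config d) * W V θ L (r : Config d)) / Z V θ L n

/-- Single-site normalization `h_m = Σ_{λ ⊢ m} ∏_j (1/ρ_j(λ)!) (θ_j/j)^{ρ_j(λ)}`. -/
noncomputable def hcoef (θ : ℕ → ℝ) (m : ℕ) : ℝ :=
  ∑ lam : Nat.Partition m, ∏ j ∈ lam.parts.toFinset,
    (1 / (Nat.factorial (Multiset.count j lam.parts)) : ℝ) *
      (θ j / (j : ℝ)) ^ (Multiset.count j lam.parts)

end Spart

namespace Spart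

lemma expNeg_zero : expNeg 0 = 1 := by simp [expNeg]

lemma expNeg_add (a b : ℝ≥0∞) : expNeg (a + b) = expNeg a * expNeg b := by
  rcases eq_or_ne a ∞ with ha | ha
  · simp [expNeg, ha]
  rcases eq_or_ne b ∞ with hb | hb
  · simp [expNeg, hb]
  simp [expNeg, ha, hb, ENNReal.add_eq_top, ENNReal.toReal_add ha hb, Real.exp_add, neg_add, mul_comm]

lemma expNeg_sum {ι : Type*} (s : Finset ι) (a : ι → ℝ≥0∞) :
    expNeg (∑ i ∈ s, a i) = ∏ i ∈ s, expNeg (a i) := by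
  classical
  induction s using Finset.induction_on with
  | empty => simp [expNeg_zero]
  | insert i s' h ih =>
                   simp [Finset.sum_insert h, Finset.prod_insert h, expNeg_add, ih]

lemma expNeg_pow (t : ℝ≥0∞) (k : ℕ) : expNeg t ^ k = expNeg (k * t) := by
  induction k with
  | zero => simp [expNeg_zero]
  | succ k ih =>
      rw [pow_succ, ih, ← expNeg_add]
      congr 1
      push_cast
      ring


section
variable {d : ℕ} (V : (Fin d → ℝ) → ℝ≥0∞) (θ : ℕ → ℝ) (L : ℝ)

lemma W_eq_prod (r : Config d) (s : Finset (Site d × ℕ)) (hs : r.support ⊆ s) :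
    W V θ L r = ∏ p ∈ s,
      (1 / (Nat.factorial (r p)) : ℝ) *
        ((θ p.2 / (p.2 : ℝ)) * expNeg ((p.2 : ℝ≥0∞) * V (scaledSite p.1 L))) ^ (r p) := by
  unfold W
  refine Finset.prod_subset hs ?_
  intro p _ hnp
  have h0 : r p = 0 := Finsupp.notMem_support_iff.mp hnp
  simp [h0]

lemma siteOcc_eq (r : Config d) (X : Finset (Site d)) (J : Finset ℕ)
    (h : r.support ⊆ X ×ˢ J) (x : Site d) :
    siteOcc r x = ∑ j ∈ J, j * r (x, j) := by
  classical
  have h1 : siteOcc r x = ∑ p ∈ X ×ˢ J, if p.1 = x then p.2 * r p else 0 := by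
    unfold siteOcc
    refine Finset.sum_subset h ?_
    intro p _ hnp
    have h0 : r p = 0 := Finsupp.notMem_support_iff.mp hnp
    simp [h0]
  rw [h1, Finset.sum_product]
  have h2 : ∀ a, (∑ j ∈ J, if a = x then j * r (a, j) else 0)
      = if a = x then ∑ j ∈ J, j * r (x, j) else 0 := by
    intro a; split
    · subst ‹a = x›; rfl
    · simp
  rw [Finset.sum_congr rfl fun a _ => h2 a, Finset.sum_ite_eq' X x]
  split
  · rfl
  · refine (Finset.sum_eq_zero ?_).symm
    intro j _
    have : (x, j) ∉ r.support := fun hm => ‹x ∉ X› (Finset.mem_product.mp (h hm)).1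
    simp [Finsupp.notMem_support_iff.mp this]

lemma mass_eq (r : Config d) (X : Finset (Site d)) (J : Finset ℕ)
    (h : r.support ⊆ X ×ˢ J) :
    mass r = ∑ x ∈ X, siteOcc r x := by
  classical
  have h1 : mass r = ∑ p ∈ X ×ˢ J, p.2 * r p := by
    unfold mass
    refine Finset.sum_subset h ?_
    intro p _ hnp
    simp [Finsupp.notMem_support_iff.mp hnp]
  rw [h1, Finset.sum_product]
  exact Finset.sum_congr rfl fun x _ => (siteOcc_eq r X J h x).symm

lemma W_factor (r : Config d) (X : Finset (Site d)) (J : Finset ℕ)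
    (h : r.support ⊆ X ×ˢ J) :
    W V θ L r = (∏ x ∈ X, expNeg ((siteOcc r x : ℝ≥0∞) * V (scaledSite x L))) *
      ∏ x ∈ X, ∏ j ∈ J,
        (1 / (Nat.factorial (r (x, j))) : ℝ) * (θ j / (j : ℝ)) ^ (r (x, j)) := by
  classical
  rw [W_eq_prod V θ L r _ h, Finset.prod_product, ← Finset.prod_mul_distrib]
  refine Finset.prod_congr rfl ?_
  intro x _
  have step : ∀ j ∈ J,
      (1 / (Nat.factorial (r (x, j))) : ℝ) *
        ((θ j / (j : ℝ)) * expNeg ((j : ℝ≥0∞) * V (scaledSite x L))) ^ (r (x, j))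
      = ((1 / (Nat.factorial (r (x, j))) : ℝ) * (θ j / (j : ℝ)) ^ (r (x, j))) *
          expNeg (((r (x, j) : ℝ≥0∞) * ((j : ℝ≥0∞) * V (scaledSite x L)))) := by
    intro j _
    rw [mul_pow, expNeg_pow]
    ring
  rw [Finset.prod_congr rfl step, Finset.prod_mul_distrib, ← expNeg_sum, mul_comm]
  congr 2
  rw [siteOcc_eq r X J h x]
  push_cast
  rw [Finset.sum_mul]
  refine Finset.sum_congr rfl ?_
  intro j _
  ring

end


lemma multiset_sum_counts (m : Multiset ℕ) (J : Finset ℕ) (h : m.toFinset ⊆ J) :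
    ∑ j ∈ J, j * Multiset.count j m = m.sum := by
  classical
  have h1 : m.sum = ∑ a ∈ m.toFinset, Multiset.count a m • a := by
    simpa using (Finset.sum_multiset_map_count m (id : ℕ → ℕ))
  rw [h1]
  rw [← Finset.sum_subset h (fun j _ hj => by
    simp [Multiset.count_eq_zero_of_notMem (fun hm => hj (Multiset.mem_toFinset.mpr hm))])]
  exact Finset.sum_congr rfl fun j _ => by rw [smul_eq_mul, mul_comm]

noncomputable def partOfCounts (J : Finset ℕ) (c : ℕ → ℕ) (m : ℕ)
    (hJ : ∀ j ∈ J, 0 < j) (hsum : ∑ j ∈ J, j * c j = m) : Nat.Partition m where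
  parts := ∑ j ∈ J, Multiset.replicate (c j) j
  parts_pos := by
    intro i hi
    rw [Multiset.mem_sum] at hi
    obtain ⟨j, hj, hij⟩ := hi
    rw [Multiset.eq_of_mem_replicate hij]
    exact hJ j hj
  parts_sum := by
    rw [Multiset.sum_sum]
    rw [← hsum]
    exact Finset.sum_congr rfl fun j _ => by
      rw [Multiset.sum_replicate, smul_eq_mul, mul_comm]

lemma partOfCounts_count (J : Finset ℕ) (c : ℕ → ℕ) (m : ℕ)
    (hJ : ∀ j ∈ J, 0 < j) (hsum : ∑ j ∈ J, j * c j = m) (k : ℕ) :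
    Multiset.count k (partOfCounts J c m hJ hsum).parts = if k ∈ J then c k else 0 := by
  classical
  show Multiset.count k (∑ j ∈ J, Multiset.replicate (c j) j) = _
  rw [Multiset.count_sum']
  simp only [Multiset.count_replicate]
  exact Finset.sum_ite_eq' J k c

lemma prod_term_subset (θ : ℕ → ℝ) (mq : Multiset ℕ) (J : Finset ℕ) (h : mq.toFinset ⊆ J) :
    ∏ j ∈ J, (1 / (Nat.factorial (Multiset.count j mq)) : ℝ) *
        (θ j / (j : ℝ)) ^ (Multiset.count j mq)
      = ∏ j ∈ mq.toFinset, (1 / (Nat.factorial (Multiset.count j mq)) : ℝ) *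
        (θ j / (j : ℝ)) ^ (Multiset.count j mq) := by
  refine (Finset.prod_subset h ?_).symm
  intro j _ hj
  have : Multiset.count j mq = 0 :=
    Multiset.count_eq_zero_of_notMem (fun hm => hj (Multiset.mem_toFinset.mpr hm))
  simp [this]

lemma hcoef_pos (θ : ℕ → ℝ) (hθ : ∀ j, 1 ≤ j → 0 ≤ θ j) (hθ1 : 0 < θ 1) (m : ℕ) :
    0 < hcoef θ m := by
  classical
  unfold hcoef
  refine Finset.sum_pos' ?_ ?_
  · intro lam _
    refine Finset.prod_nonneg ?_
    intro j hj
    have hj1 : 1 ≤ j := lam.parts_pos (Multiset.mem_toFinset.mp hj)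
    have : (0:ℝ) ≤ θ j / j := div_nonneg (hθ j hj1) (by positivity)
    positivity
  · refine ⟨partOfCounts {1} (fun _ => m) m (by simp) (by simp), Finset.mem_univ _, ?_⟩
    have hparts : (partOfCounts {1} (fun _ => m) m (by simp) (by simp)).parts
        = Multiset.replicate m 1 := by
      simp [partOfCounts]
    rw [← prod_term_subset θ _ {1} ?_]
    · rw [Finset.prod_singleton, partOfCounts_count]
      simp only [Finset.mem_singleton, if_pos rfl]
      have h1 : (0:ℝ) < θ 1 / 1 := by simpa using hθ1
      positivity
    · intro j hj
      rw [Multiset.mem_toFinset, hparts] at hj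
      simp [Multiset.eq_of_mem_replicate hj]


lemma parts_toFinset_subset {m n : ℕ} (lam : Nat.Partition m) (hmn : m ≤ n) :
    lam.parts.toFinset ⊆ Finset.Icc 1 n := by
  intro j hj
  rw [Multiset.mem_toFinset] at hj
  refine Finset.mem_Icc.mpr ⟨lam.parts_pos hj, ?_⟩
  calc j ≤ lam.parts.sum := Multiset.single_le_sum (fun _ _ => Nat.zero_le _) _ hj
  _ = m := lam.parts_sum
  _ ≤ n := hmn

section Phi
variable {d : ℕ}

noncomputable def Phi (η : Site d →₀ ℕ) (n : ℕ) (hb : ∀ x, η x ≤ n)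
    (f : ∀ x : {x // x ∈ η.support}, Nat.Partition (η x)) : Config d :=
  Finsupp.onFinset (η.support ×ˢ Finset.Icc 1 n)
    (fun p => if h : p.1 ∈ η.support then Multiset.count p.2 (f ⟨p.1, h⟩).parts else 0)
    (by
      intro p hp
      simp only at hp
      rw [Finset.mem_product]
      by_cases h : p.1 ∈ η.support
      · rw [dif_pos h] at hp
        have hmem : p.2 ∈ (f ⟨p.1, h⟩).parts := by
          by_contra hc
          exact hp (Multiset.count_eq_zero_of_notMem hc)
        exact ⟨h, parts_toFinset_subset (f ⟨p.1, h⟩) (hb p.1)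
          (Multiset.mem_toFinset.mpr hmem)⟩
      · rw [dif_neg h] at hp
        exact absurd rfl hp)

lemma Phi_apply (η : Site d →₀ ℕ) (n : ℕ) (hb : ∀ x, η x ≤ n)
    (f : ∀ x : {x // x ∈ η.support}, Nat.Partition (η x)) (p : Site d × ℕ) :
    Phi η n hb f p
      = if h : p.1 ∈ η.support then Multiset.count p.2 (f ⟨p.1, h⟩).parts else 0 := rfl

lemma Phi_support (η : Site d →₀ ℕ) (n : ℕ) (hb : ∀ x, η x ≤ n)
    (f : ∀ x : {x // x ∈ η.support}, Nat.Partition (η x)) :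
    (Phi η n hb f).support ⊆ η.support ×ˢ Finset.Icc 1 n :=
  Finsupp.support_onFinset_subset

lemma siteOcc_Phi (η : Site d →₀ ℕ) (n : ℕ) (hb : ∀ x, η x ≤ n)
    (f : ∀ x : {x // x ∈ η.support}, Nat.Partition (η x)) (x : Site d) :
    siteOcc (Phi η n hb f) x = η x := by
  rw [siteOcc_eq (Phi η n hb f) η.support (Finset.Icc 1 n) (Phi_support η n hb f) x]
  by_cases hx : x ∈ η.support
  · have h1 : ∀ j, Phi η n hb f (x, j) = Multiset.count j (f ⟨x, hx⟩).parts := by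
      intro j; rw [Phi_apply]; exact dif_pos hx
    simp only [h1]
    rw [multiset_sum_counts _ _ (parts_toFinset_subset (f ⟨x, hx⟩) (hb x))]
    exact (f ⟨x, hx⟩).parts_sum
  · have h1 : ∀ j, Phi η n hb f (x, j) = 0 := by
      intro j; rw [Phi_apply]; exact dif_neg hx
    simp only [h1, Nat.mul_zero, Finset.sum_const_zero]
    exact (Finsupp.notMem_support_iff.mp hx).symm

lemma mass_Phi (η : Site d →₀ ℕ) (n : ℕ) (hb : ∀ x, η x ≤ n)
    (f : ∀ x : {x // x ∈ η.support}, Nat.Partition (η x)) :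
    mass (Phi η n hb f) = ∑ x ∈ η.support, η x := by
  rw [mass_eq (Phi η n hb f) η.support (Finset.Icc 1 n) (Phi_support η n hb f)]
  exact Finset.sum_congr rfl fun x _ => siteOcc_Phi η n hb f x

lemma Phi_injective (η : Site d →₀ ℕ) (n : ℕ) (hb : ∀ x, η x ≤ n) :
    Function.Injective (Phi η n hb) := by
  intro f g hfg
  funext x
  have hparts : (f x).parts = (g x).parts := by
    ext j
    have h1 := DFunLike.congr_fun hfg (x.1, j)
    rw [Phi_apply, Phi_apply] at h1
    simpa [dif_pos x.2] using h1
  exact Nat.Partition.ext hparts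

lemma W_Phi (V : (Fin d → ℝ) → ℝ≥0∞) (θ : ℕ → ℝ) (L : ℝ)
    (η : Site d →₀ ℕ) (n : ℕ) (hb : ∀ x, η x ≤ n)
    (f : ∀ x : {x // x ∈ η.support}, Nat.Partition (η x)) :
    W V θ L (Phi η n hb f)
      = (∏ x ∈ η.support, expNeg ((η x : ℝ≥0∞) * V (scaledSite x L))) *
        ∏ x : {x // x ∈ η.support}, ∏ j ∈ (f x).parts.toFinset,
          (1 / (Nat.factorial (Multiset.count j (f x).parts)) : ℝ) *
            (θ j / (j : ℝ)) ^ (Multiset.count j (f x).parts) := by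
  rw [W_factor V θ L (Phi η n hb f) η.support (Finset.Icc 1 n) (Phi_support η n hb f)]
  congr 1
  · exact Finset.prod_congr rfl fun x _ => by rw [siteOcc_Phi η n hb f x]
  · rw [← Finset.prod_attach η.support]
    refine Finset.prod_congr rfl ?_
    intro x _
    have h1 : ∀ j, Phi η n hb f (x.1, j) = Multiset.count j (f x).parts := by
      intro j; rw [Phi_apply]; simp [dif_pos x.2]
    simp only [h1]
    exact prod_term_subset θ _ _ (parts_toFinset_subset (f x) (hb x.1))

end Phi


section Surj
variable {d : ℕ}

lemma le_siteOcc (r : Config d) (p : Site d × ℕ) (hp : p ∈ r.support) :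
    p.2 * r p ≤ siteOcc r p.1 := by
  unfold siteOcc
  have := Finset.single_le_sum (f := fun q : Site d × ℕ => if q.1 = p.1 then q.2 * r q else 0)
    (fun i _ => by positivity) hp
  simpa using this

lemma config_mem_support (r : Config d) (η : Site d →₀ ℕ) (n : ℕ)
    (hocc : ∀ x, siteOcc r x = η x) (hb : ∀ x, η x ≤ n)
    (hzero : ∀ x, r (x, 0) = 0) :
    r.support ⊆ η.support ×ˢ Finset.Icc 1 n := by
  intro p hp
  have hrp : r p ≠ 0 := Finsupp.mem_support_iff.mp hp
  have hp2 : 1 ≤ p.2 := by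
    rcases Nat.eq_zero_or_pos p.2 with h | h
    · exfalso
      apply hrp
      have : p = (p.1, 0) := by rw [← h]
      rw [this]
      exact hzero p.1
    · exact h
  have hle : p.2 * r p ≤ η p.1 := by
    rw [← hocc p.1]
    exact le_siteOcc r p hp
  have hp2' : p.2 ≤ η p.1 :=
    le_trans (Nat.le_mul_of_pos_right p.2 (Nat.pos_of_ne_zero hrp)) hle
  rw [Finset.mem_product]
  refine ⟨Finsupp.mem_support_iff.mpr ?_, Finset.mem_Icc.mpr ⟨hp2, le_trans hp2' (hb p.1)⟩⟩
  intro h0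
  rw [h0] at hp2'
  omega

lemma W_ne_zero_zero_part (V : (Fin d → ℝ) → ℝ≥0∞) (θ : ℕ → ℝ) (L : ℝ)
    (r : Config d) (hW : W V θ L r ≠ 0) (x : Site d) : r (x, 0) = 0 := by
  by_contra hc
  apply hW
  have hmem : (x, 0) ∈ r.support := Finsupp.mem_support_iff.mpr hc
  refine Finset.prod_eq_zero hmem ?_
  simp [div_zero, zero_pow hc]

lemma exists_Phi_eq (V : (Fin d → ℝ) → ℝ≥0∞) (θ : ℕ → ℝ) (L : ℝ)
    (η : Site d →₀ ℕ) (n : ℕ) (hb : ∀ x, η x ≤ n)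
    (r : Config d) (hocc : ∀ x, siteOcc r x = η x) (hW : W V θ L r ≠ 0) :
    ∃ f, Phi η n hb f = r := by
  classical
  have hzero : ∀ x, r (x, 0) = 0 := W_ne_zero_zero_part V θ L r hW
  have hsub : r.support ⊆ η.support ×ˢ Finset.Icc 1 n :=
    config_mem_support r η n hocc hb hzero
  have hpos : ∀ j ∈ Finset.Icc 1 n, 0 < j := fun j hj => (Finset.mem_Icc.mp hj).1
  have hs : ∀ x : {x // x ∈ η.support},
      ∑ j ∈ Finset.Icc 1 n, j * r (x.1, j) = η x.1 := by
    intro x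
    rw [← siteOcc_eq r η.support (Finset.Icc 1 n) hsub x.1]
    exact hocc x.1
  refine ⟨fun x => partOfCounts (Finset.Icc 1 n) (fun j => r (x.1, j)) (η x.1)
    hpos (hs x), ?_⟩
  ext p
  rw [Phi_apply]
  by_cases h : p.1 ∈ η.support
  · rw [dif_pos h, partOfCounts_count]
    by_cases hj : p.2 ∈ Finset.Icc 1 n
    · rw [if_pos hj]
    · rw [if_neg hj]
      by_contra hc
      have : p ∈ r.support := Finsupp.mem_support_iff.mpr fun h0 => hc h0.symm
      exact hj (Finset.mem_product.mp (hsub this)).2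
  · rw [dif_neg h]
    by_contra hc
    have : p ∈ r.support := Finsupp.mem_support_iff.mpr fun h0 => hc h0.symm
    exact h (Finset.mem_product.mp (hsub this)).1

end Surj




/-- Proposition 2.2(a): conditional law given the site occupation numbers. -/
theorem statement2 (d : ℕ) (hd : 1 ≤ d)
    (V : (Fin d → ℝ) → ℝ≥0∞) (θ : ℕ → ℝ) (L : ℝ) (n : ℕ)
    (hL : 0 < L) (hθ : ∀ j, 1 ≤ j → 0 ≤ θ j) (hθ1 : 0 < θ 1)
    (hZsum : Summable (fun r : {r : Config d // mass r = n} => W V θ L (r : Config d)))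
    (hZpos : 0 < Z V θ L n)
    (η : Site d →₀ ℕ) (hη : ∑ x ∈ η.support, η x = n)
    (hEpos : 0 < P V θ L n {r' | ∀ x : Site d, siteOcc r' x = η x})
    (r : Config d) (hmass : mass r = n) (hr0 : ∀ x : Site d, r (x, 0) = 0)
    (hrη : ∀ x : Site d, siteOcc r x = η x) :
    P V θ L n {r} / P V θ L n {r' | ∀ x : Site d, siteOcc r' x = η x}
      = ∏ x ∈ η.support, ((1 / hcoef θ (η x)) *
          ∏ j ∈ r.support.image Prod.snd,
            (1 / (Nat.factorial (r (x, j))) : ℝ) * (θ j / (j : ℝ)) ^ (r (x, j))) := by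
  classical
  have hb : ∀ x, η x ≤ n := by
    intro x
    by_cases hx : x ∈ η.support
    · rw [← hη]
      exact Finset.single_le_sum (fun _ _ => Nat.zero_le _) hx
    · simp [Finsupp.notMem_support_iff.mp hx]
  set E : Set (Config d) := {r' | ∀ x : Site d, siteOcc r' x = η x} with hE
  set C : ℝ := ∏ x ∈ η.support, expNeg ((η x : ℝ≥0∞) * V (scaledSite x L)) with hCdef
  set H : ℝ := ∏ x ∈ η.support, hcoef θ (η x) with hHdef
  have hHpos : 0 < H := Finset.prod_pos fun x _ => hcoef_pos θ hθ hθ1 _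
  have hmem : ∀ f : ∀ x : {x // x ∈ η.support}, Nat.Partition (η x),
      mass (Phi η n hb f) = n ∧ Phi η n hb f ∈ E := by
    intro f
    exact ⟨by rw [mass_Phi η n hb f, hη], fun x => siteOcc_Phi η n hb f x⟩
  set g : (∀ x : {x // x ∈ η.support}, Nat.Partition (η x)) →
      {r' : Config d // mass r' = n ∧ r' ∈ E} := fun f => ⟨Phi η n hb f, hmem f⟩ with hg
  have hginj : Function.Injective g := by
    intro f1 f2 h12
    exact Phi_injective η n hb (congrArg Subtype.val h12)
  -- the conditional event sum
  have hS_eq : (∑' r' : {r' : Config d // mass r' = n ∧ r' ∈ E}, W V θ L (r' : Config d))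
      = C * H := by
    rw [tsum_eq_sum (s := Finset.image g Finset.univ) ?_]
    · rw [Finset.sum_image (fun a _ b _ h => hginj h)]
      have hW : ∀ f, W V θ L ((g f : Config d))
          = C * ∏ x : {x // x ∈ η.support},
              ∏ j ∈ (f x).parts.toFinset,
                (1 / (Nat.factorial (Multiset.count j (f x).parts)) : ℝ) *
                  (θ j / (j : ℝ)) ^ (Multiset.count j (f x).parts) :=
        fun f => W_Phi V θ L η n hb f
      rw [Finset.sum_congr rfl fun f _ => hW f, ← Finset.mul_sum]
      congr 1
      rw [← Fintype.prod_sum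
        (f := fun (x : {x // x ∈ η.support}) (lam : Nat.Partition (η x)) =>
          ∏ j ∈ lam.parts.toFinset,
            (1 / (Nat.factorial (Multiset.count j lam.parts)) : ℝ) *
              (θ j / (j : ℝ)) ^ (Multiset.count j lam.parts))]
      rw [hHdef, ← Finset.prod_attach η.support (fun x => hcoef θ (η x))]
      rfl
    · intro b hbmem
      by_contra hWb
      obtain ⟨f, hf⟩ := exists_Phi_eq V θ L η n hb b b.2.2 hWb
      exact hbmem (Finset.mem_image.mpr ⟨f, Finset.mem_univ f, Subtype.ext hf⟩)
  -- the singleton sum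
  have hsingle : P V θ L n {r} = W V θ L r / Z V θ L n := by
    unfold P
    congr 1
    rw [tsum_eq_sum
      (s := ({⟨r, hmass, rfl⟩} : Finset {r' : Config d // mass r' = n ∧ r' ∈ ({r} : Set (Config d))})) ?_]
    · simp
    · intro b hbmem
      exact absurd (Finset.mem_singleton.mpr (Subtype.ext (Set.mem_singleton_iff.mp b.2.2))) hbmem
  -- W r decomposition
  have hsubr : r.support ⊆ η.support ×ˢ (r.support.image Prod.snd) := by
    intro p hp
    rw [Finset.mem_product]
    have hrp : 0 < r p := Nat.pos_of_ne_zero (Finsupp.mem_support_iff.mp hp)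
    have h2 : 0 < p.2 := by
      rcases Nat.eq_zero_or_pos p.2 with h | h
      · exfalso
        apply Finsupp.mem_support_iff.mp hp
        have hpp : p = (p.1, 0) := by rw [← h]
        rw [hpp]
        exact hr0 p.1
      · exact h
    refine ⟨?_, Finset.mem_image_of_mem Prod.snd hp⟩
    have hle := le_siteOcc r p hp
    rw [hrη p.1] at hle
    refine Finsupp.mem_support_iff.mpr ?_
    intro h0
    rw [h0] at hle
    have := Nat.mul_pos h2 hrp
    omega
  have hWr : W V θ L r
      = C * ∏ x ∈ η.support, ∏ j ∈ r.support.image Prod.snd,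
          (1 / (Nat.factorial (r (x, j))) : ℝ) * (θ j / (j : ℝ)) ^ (r (x, j)) := by
    rw [W_factor V θ L r η.support _ hsubr]
    congr 1
    exact Finset.prod_congr rfl fun x _ => by rw [hrη x]
  -- conclude
  have hZ : Z V θ L n ≠ 0 := ne_of_gt hZpos
  have hPE : P V θ L n E = (C * H) / Z V θ L n := by
    unfold P
    rw [hS_eq]
  have hSpos : 0 < C * H := by
    have h1 := hEpos
    rw [show P V θ L n {r' | ∀ x : Site d, siteOcc r' x = η x} = P V θ L n E from rfl,
      hPE] at h1
    rcases div_pos_iff.mp h1 with ⟨h, _⟩ | ⟨_, h⟩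
    · exact h
    · linarith
  have hC : C ≠ 0 := by
    intro h
    rw [h, zero_mul] at hSpos
    exact lt_irrefl 0 hSpos
  rw [show P V θ L n {r' | ∀ x : Site d, siteOcc r' x = η x} = P V θ L n E from rfl,
    hsingle, hPE, hWr]
  have hRHS : ∏ x ∈ η.support, ((1 / hcoef θ (η x)) *
        ∏ j ∈ r.support.image Prod.snd,
          (1 / (Nat.factorial (r (x, j))) : ℝ) * (θ j / (j : ℝ)) ^ (r (x, j)))
      = (∏ x ∈ η.support, ∏ j ∈ r.support.image Prod.snd,
          (1 / (Nat.factorial (r (x, j))) : ℝ) * (θ j / (j : ℝ)) ^ (r (x, j))) / H := by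
    rw [Finset.prod_mul_distrib, Finset.prod_div_distrib, Finset.prod_const_one, hHdef]
    rw [one_div, inv_mul_eq_div]
  rw [hRHS]
  rw [div_div_div_comm, div_self hZ, div_one, mul_div_mul_left _ _ hC]


end Spart
end

section
/- Asymptotics of the single-site normalization for subexponential weights (Theorem 2.5): let θ_j > 0 for all j with θ_{n+1}/θ_n → 1 as n → ∞, and suppose there are constants c_j such that θ_{n−j}/θ_n ≤ c_j for all n and all integers 1 ≤ j ≤ n/2, with Σ_{j≥1} θ_j·c_j/j < ∞. Then Σ_{j≥1} θ_j/j < ∞ and n·h_n/θ_n → exp(Σ_{j≥1} θ_j/j) as n → ∞. -/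
open scoped BigOperators ENNReal NNReal
open Filter MeasureTheory

namespace Spart

open Filter Finset

set_option maxHeartbeats 1000000

section Aux

noncomputable def F (θ : ℕ → ℝ) (j k : ℕ) : ℝ := (θ j / (j:ℝ)) ^ k / (Nat.factorial k)

noncomputable def w (θ : ℕ → ℝ) (m : Multiset ℕ) : ℝ := ∏ i ∈ m.toFinset, F θ i (m.count i)

lemma F_zero (θ : ℕ → ℝ) (j : ℕ) : F θ j 0 = 1 := by simp [F]

lemma F_nonneg (θ : ℕ → ℝ) (hθ : ∀ j : ℕ, 1 ≤ j → 0 < θ j) (j k : ℕ) : 0 ≤ F θ j k := by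
  apply div_nonneg _ (by positivity)
  apply pow_nonneg
  rcases Nat.eq_zero_or_pos j with h | h
  · simp [h]
  · exact div_nonneg (hθ j h).le (by positivity)

lemma hcoef_eq (θ : ℕ → ℝ) (n : ℕ) : hcoef θ n = ∑ lam : Nat.Partition n, w θ lam.parts := by
  unfold hcoef w F
  refine Finset.sum_congr rfl fun lam _ => Finset.prod_congr rfl fun j _ => ?_
  rw [one_div, div_eq_mul_inv, mul_comm]; rw [div_eq_mul_inv]

lemma w_eq_prod (θ : ℕ → ℝ) (m : Multiset ℕ) (S : Finset ℕ) (h : m.toFinset ⊆ S) :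
    w θ m = ∏ i ∈ S, F θ i (m.count i) := by
  rw [w]
  apply Finset.prod_subset h
  intro i _ hi
  rw [Multiset.count_eq_zero_of_notMem (by simpa using hi), F_zero]

lemma w_nonneg (θ : ℕ → ℝ) (hθ : ∀ j : ℕ, 1 ≤ j → 0 < θ j) (m : Multiset ℕ) : 0 ≤ w θ m :=
  Finset.prod_nonneg fun i _ => F_nonneg θ hθ i _

lemma hcoef_zero (θ : ℕ → ℝ) : hcoef θ 0 = 1 := by
  rw [hcoef_eq]
  rw [Finset.sum_eq_single default (fun b _ hb => absurd (Subsingleton.elim b default) hb)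
    (by simp)]
  have : (default : Nat.Partition 0).parts = 0 := rfl
  simp [w, this]

lemma hcoef_nonneg (θ : ℕ → ℝ) (hθ : ∀ j : ℕ, 1 ≤ j → 0 < θ j) (n : ℕ) : 0 ≤ hcoef θ n := by
  rw [hcoef_eq]; exact Finset.sum_nonneg fun lam _ => w_nonneg θ hθ _


lemma hcoef_eq' (θ : ℕ → ℝ) (n : ℕ) : hcoef θ n = ∑ lam : Nat.Partition n, w θ lam.parts :=
  hcoef_eq θ n

/-- removing one part equal to `j` -/
def consEquiv (j n : ℕ) (hj : 1 ≤ j) (hjn : j ≤ n) :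
    {lam : Nat.Partition n // j ∈ lam.parts} ≃ Nat.Partition (n - j) where
  toFun lam := ⟨(lam : Nat.Partition n).parts.erase j,
    fun hi => (lam : Nat.Partition n).parts_pos (Multiset.mem_of_mem_erase hi), by
      have h1 : j ::ₘ (lam : Nat.Partition n).parts.erase j = (lam : Nat.Partition n).parts :=
        Multiset.cons_erase lam.2
      have h2 := (lam : Nat.Partition n).parts_sum
      have := congrArg Multiset.sum h1
      rw [Multiset.sum_cons, h2] at this
      omega⟩
  invFun mu := ⟨⟨j ::ₘ mu.parts, fun hi => by
      rcases Multiset.mem_cons.mp hi with h | h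
      · omega
      · exact mu.parts_pos h, by
      rw [Multiset.sum_cons, mu.parts_sum]; omega⟩, Multiset.mem_cons_self _ _⟩
  left_inv lam := by
    apply Subtype.ext
    apply Nat.Partition.ext
    exact Multiset.cons_erase lam.2
  right_inv mu := by
    apply Nat.Partition.ext
    exact Multiset.erase_cons_head _ _

lemma mem_range_of_mem_parts {n : ℕ} (lam : Nat.Partition n) {i : ℕ} (hi : i ∈ lam.parts) :
    i ∈ Finset.range (n + 1) := by
  have : i ≤ lam.parts.sum := Multiset.single_le_sum (fun x _ => Nat.zero_le x) _ hi
  rw [lam.parts_sum] at this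
  simpa [Nat.lt_succ_iff] using this

lemma toFinset_subset_range {n : ℕ} (lam : Nat.Partition n) :
    lam.parts.toFinset ⊆ Finset.range (n + 1) := fun i hi =>
  mem_range_of_mem_parts lam (Multiset.mem_toFinset.mp hi)

lemma sum_count_mul (n : ℕ) (lam : Nat.Partition n) :
    ∑ j ∈ Finset.range (n + 1), j * lam.parts.count j = n := by
  have h := Multiset.toFinset_sum_count_nsmul_eq lam.parts
  have h2 := congrArg Multiset.sum h
  rw [Multiset.sum_sum] at h2
  rw [lam.parts_sum] at h2
  simp only [Multiset.sum_nsmul, Multiset.sum_singleton, smul_eq_mul] at h2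
  calc ∑ j ∈ Finset.range (n+1), j * lam.parts.count j
      = ∑ j ∈ lam.parts.toFinset, j * lam.parts.count j := by
        symm
        apply Finset.sum_subset (toFinset_subset_range lam)
        intro j _ hj
        rw [Multiset.count_eq_zero_of_notMem (by simpa using hj), Nat.mul_zero]
    _ = n := (Finset.sum_congr rfl fun a _ => mul_comm a (lam.parts.count a)).trans h2

lemma key_step (θ : ℕ → ℝ) (j n : ℕ) (hj : 1 ≤ j) (hjn : j ≤ n) :
    ∑ lam : Nat.Partition n, (j * lam.parts.count j : ℝ) * w θ lam.parts
      = θ j * hcoef θ (n - j) := by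
  classical
  rw [← Finset.sum_filter_of_ne (s := Finset.univ)
      (p := fun lam : Nat.Partition n => j ∈ lam.parts) (by
    intro lam _ hne
    by_contra hmem
    rw [Multiset.count_eq_zero_of_notMem hmem] at hne
    simp at hne)]
  rw [Finset.sum_subtype (p := fun lam : Nat.Partition n => j ∈ lam.parts) _ (by simp) _]
  rw [← Equiv.sum_comp (consEquiv j n hj hjn).symm
    (fun lam => (j * Multiset.count j (lam : Nat.Partition n).parts : ℝ) * w θ (lam : Nat.Partition n).parts)]
  rw [hcoef_eq, Finset.mul_sum]
  refine Finset.sum_congr rfl fun mu _ => ?_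
  -- now: (j * count j (j ::ₘ mu.parts)) * w θ (j ::ₘ mu.parts) = θ j * w θ mu.parts
  have hme : ((consEquiv j n hj hjn).symm mu : Nat.Partition n).parts = j ::ₘ mu.parts := rfl
  rw [hme]
  set m' := mu.parts with hm'
  set S : Finset ℕ := insert j (j ::ₘ m').toFinset with hS
  have hsub1 : (j ::ₘ m').toFinset ⊆ S := Finset.subset_insert _ _
  have hsub2 : m'.toFinset ⊆ S := by
    intro i hi
    rw [hS]
    rcases eq_or_ne i j with h | h
    · simp [h]
    · apply Finset.mem_insert_of_mem
      rw [Multiset.mem_toFinset] at *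
      exact Multiset.mem_cons_of_mem hi
  have hjS : j ∈ S := Finset.mem_insert_self _ _
  rw [w_eq_prod θ _ S hsub1, w_eq_prod θ m' S hsub2]
  rw [← Finset.prod_erase_mul _ _ hjS, ← Finset.prod_erase_mul _ _ hjS]
  have hcount : ∀ i ∈ S.erase j, (j ::ₘ m').count i = m'.count i := fun i hi =>
    Multiset.count_cons_of_ne (Finset.ne_of_mem_erase hi) _
  rw [Finset.prod_congr rfl fun i hi => by rw [hcount i hi]]
  set P := ∏ i ∈ S.erase j, F θ i (m'.count i)
  rw [Multiset.count_cons_self]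
  set k := m'.count j
  rw [F, F, mul_comm (P) _, mul_comm P _, ← mul_assoc, ← mul_assoc]
  congr 1
  have hjne : (j:ℝ) ≠ 0 := Nat.cast_ne_zero.mpr (by omega)
  have h1 : (Nat.factorial (k+1) : ℝ) = (k+1) * Nat.factorial k := by
    rw [Nat.factorial_succ]; push_cast; ring
  rw [pow_succ, h1]
  have hf : (Nat.factorial k : ℝ) ≠ 0 := Nat.cast_ne_zero.mpr (Nat.factorial_ne_zero k)
  field_simp
  push_cast
  ring

lemma hcoef_rec (θ : ℕ → ℝ) (n : ℕ) (hn : 1 ≤ n) :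
    (n : ℝ) * hcoef θ n = ∑ j ∈ Finset.Icc 1 n, θ j * hcoef θ (n - j) := by
  classical
  have step1 : (n : ℝ) * hcoef θ n
      = ∑ lam : Nat.Partition n, (∑ j ∈ Finset.range (n+1), (j * lam.parts.count j : ℝ)) * w θ lam.parts := by
    rw [hcoef_eq, Finset.mul_sum]
    refine Finset.sum_congr rfl fun lam _ => ?_
    congr 1
    calc (n:ℝ) = ((∑ j ∈ Finset.range (n+1), j * lam.parts.count j : ℕ) : ℝ) := by
          rw [sum_count_mul n lam]
      _ = _ := by push_cast; ring
  rw [step1]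
  simp_rw [Finset.sum_mul]
  rw [Finset.sum_comm]
  have hzero : ∑ lam : Nat.Partition n, ((0:ℕ) * lam.parts.count 0 : ℝ) * w θ lam.parts = 0 := by
    simp
  have hrange : Finset.range (n+1) = insert 0 (Finset.Icc 1 n) := by
    ext i; simp [Nat.lt_succ_iff]; omega
  rw [hrange, Finset.sum_insert (by simp), hzero, zero_add]
  exact Finset.sum_congr rfl fun j hj => by
    rw [Finset.mem_Icc] at hj
    exact key_step θ j n hj.1 hj.2
section Psi
variable (N : ℕ)

/-- the multiset with `p j` copies of `j+1` for each `j : Fin N`. -/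
def psi (p : Fin N → ℕ) : Multiset ℕ := ∑ j : Fin N, Multiset.replicate (p j) ((j:ℕ)+1)

lemma count_psi (p : Fin N → ℕ) (j : Fin N) : (psi N p).count ((j:ℕ)+1) = p j := by
  classical
  rw [psi, Multiset.count_sum']
  rw [Finset.sum_eq_single j]
  · simp [Multiset.count_replicate]
  · intro b _ hb
    rw [Multiset.count_replicate, if_neg]
    intro h
    apply hb
    apply Fin.ext
    omega
  · simp

lemma mem_psi_pos (p : Fin N → ℕ) (i : ℕ) (hi : i ∈ psi N p) : 0 < i ∧ i ≤ N := by
  rw [psi, Multiset.mem_sum] at hi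
  obtain ⟨j, _, hj⟩ := hi
  rw [Multiset.eq_of_mem_replicate hj]
  omega

lemma count_psi_notmem (p : Fin N → ℕ) (i : ℕ) (hi : ¬ (0 < i ∧ i ≤ N)) :
    (psi N p).count i = 0 := by
  rw [Multiset.count_eq_zero]
  intro h
  exact hi (mem_psi_pos N p i h)

lemma psi_injective : Function.Injective (psi N) := by
  intro p q h
  funext j
  rw [← count_psi N p j, ← count_psi N q j, h]

lemma psi_sum (p : Fin N → ℕ) (M : ℕ) (hp : ∀ j, p j ≤ M) : (psi N p).sum ≤ N * N * M := by
  rw [psi, Multiset.sum_sum]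
  have : ∀ j : Fin N, (Multiset.replicate (p j) ((j:ℕ)+1)).sum ≤ N * M := by
    intro j
    rw [Multiset.sum_replicate, smul_eq_mul]
    have h1 : (j:ℕ)+1 ≤ N := j.2
    calc p j * ((j:ℕ)+1) ≤ M * N := Nat.mul_le_mul (hp j) h1
      _ = N * M := Nat.mul_comm _ _
  calc ∑ j : Fin N, (Multiset.replicate (p j) ((j:ℕ)+1)).sum ≤ ∑ _j : Fin N, N * M :=
        Finset.sum_le_sum fun j _ => this j
    _ = N * (N * M) := by simp [Finset.sum_const, Nat.mul_comm]
    _ = N * N * M := by ring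

lemma w_psi (θ : ℕ → ℝ) (p : Fin N → ℕ) :
    w θ (psi N p) = ∏ j : Fin N, F θ ((j:ℕ)+1) (p j) := by
  classical
  have hsub : (psi N p).toFinset ⊆ Finset.image (fun j : Fin N => (j:ℕ)+1) Finset.univ := by
    intro i hi
    rw [Multiset.mem_toFinset] at hi
    obtain ⟨h1, h2⟩ := mem_psi_pos N p i hi
    simp only [Finset.mem_image, Finset.mem_univ, true_and]
    exact ⟨⟨i-1, by omega⟩, by simp; omega⟩
  rw [w_eq_prod θ _ _ hsub, Finset.prod_image (by intro a _ b _ h; exact Fin.ext (by have h' : (a:ℕ) + 1 = (b:ℕ) + 1 := h; omega))]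
  exact Finset.prod_congr rfl fun j _ => by rw [count_psi]

end Psi

/-- all partition multisets with sum ≤ K -/
noncomputable def PF (K : ℕ) : Finset (Multiset ℕ) :=
  (Finset.range (K+1)).biUnion (fun n => Finset.image (Nat.Partition.parts (n := n)) Finset.univ)

lemma parts_injective (n : ℕ) : Function.Injective (Nat.Partition.parts (n := n)) :=
  fun a b h => Nat.Partition.ext h

lemma mem_PF (K : ℕ) (m : Multiset ℕ) :
    m ∈ PF K ↔ (∀ i ∈ m, 0 < i) ∧ m.sum ≤ K := by
  constructor
  · rintro hm
    rw [PF, Finset.mem_biUnion] at hm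
    obtain ⟨n, hn, hm⟩ := hm
    rw [Finset.mem_image] at hm
    obtain ⟨lam, _, rfl⟩ := hm
    refine ⟨fun i hi => lam.parts_pos hi, ?_⟩
    rw [lam.parts_sum]
    simpa [Nat.lt_succ_iff] using hn
  · rintro ⟨h1, h2⟩
    rw [PF, Finset.mem_biUnion]
    refine ⟨m.sum, by simpa [Nat.lt_succ_iff] using h2, ?_⟩
    rw [Finset.mem_image]
    exact ⟨⟨m, fun hi => h1 _ hi, rfl⟩, Finset.mem_univ _, rfl⟩

lemma sum_PF (θ : ℕ → ℝ) (K : ℕ) :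
    ∑ m ∈ PF K, w θ m = ∑ n ∈ Finset.range (K+1), hcoef θ n := by
  classical
  rw [PF, Finset.sum_biUnion]
  · refine Finset.sum_congr rfl fun n _ => ?_
    rw [Finset.sum_image (fun a _ b _ h => parts_injective n h), hcoef_eq]
  · intro a ha b hb hab
    simp only [Finset.disjoint_left]
    intro s hs hs2
    rw [Finset.mem_image] at hs hs2
    obtain ⟨lam, _, rfl⟩ := hs
    obtain ⟨mu, _, h⟩ := hs2
    apply hab
    rw [← lam.parts_sum, ← h, mu.parts_sum]

section
variable (θ : ℕ → ℝ) (hθ : ∀ j : ℕ, 1 ≤ j → 0 < θ j)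

lemma PF_subset_image (K : ℕ) :
    PF K ⊆ Finset.image (psi K) (Fintype.piFinset (fun _ : Fin K => Finset.range (K+1))) := by
  classical
  intro m hm
  rw [mem_PF] at hm
  obtain ⟨hpos, hsum⟩ := hm
  rw [Finset.mem_image]
  have hcount : ∀ i : ℕ, m.count i ≤ K := by
    intro i
    calc m.count i ≤ Multiset.card m := Multiset.count_le_card i m
      _ = Multiset.card m • 1 := by simp
      _ ≤ m.sum := Multiset.card_nsmul_le_sum (fun x hx => hpos x hx)
      _ ≤ K := hsum
  refine ⟨fun j => m.count ((j:ℕ)+1), ?_, ?_⟩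
  · rw [Fintype.mem_piFinset]
    intro j
    rw [Finset.mem_range, Nat.lt_succ_iff]
    exact hcount _
  · ext i
    rcases Classical.em (0 < i ∧ i ≤ K) with h | h
    · obtain ⟨h1, h2⟩ := h
      have := count_psi K (fun j => m.count ((j:ℕ)+1)) ⟨i-1, by omega⟩
      simp only at this
      have hi : (i - 1) + 1 = i := by omega
      rw [hi] at this
      rw [this]
    · rw [count_psi_notmem K _ i h]
      symm
      rw [Multiset.count_eq_zero]
      intro hmem
      apply h
      refine ⟨hpos i hmem, ?_⟩
      calc i ≤ m.sum := Multiset.single_le_sum (fun x _ => Nat.zero_le x) _ hmem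
        _ ≤ K := hsum

lemma image_subset_PF (N M : ℕ) :
    Finset.image (psi N) (Fintype.piFinset (fun _ : Fin N => Finset.range (M+1))) ⊆
      PF (N*N*M) := by
  intro m hm
  rw [Finset.mem_image] at hm
  obtain ⟨p, hp, rfl⟩ := hm
  rw [mem_PF]
  rw [Fintype.mem_piFinset] at hp
  refine ⟨fun i hi => (mem_psi_pos N p i hi).1, ?_⟩
  exact psi_sum N p M (fun j => by have := hp j; rw [Finset.mem_range, Nat.lt_succ_iff] at this; exact this)

lemma prod_eq_sum_image (N M : ℕ) :
    ∏ j : Fin N, ∑ m ∈ Finset.range (M+1), F θ ((j:ℕ)+1) m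
      = ∑ m ∈ Finset.image (psi N) (Fintype.piFinset (fun _ : Fin N => Finset.range (M+1))), w θ m := by
  classical
  rw [Finset.prod_univ_sum]
  rw [Finset.sum_image (fun a _ b _ h => psi_injective N h)]
  exact Finset.sum_congr rfl fun p _ => (w_psi N θ p).symm

lemma hasSum_exp_F (i : ℕ) : HasSum (fun k => F θ i k) (Real.exp (θ i / i)) := by
  rw [Real.exp_eq_exp_ℝ]
  exact_mod_cast NormedSpace.expSeries_div_hasSum_exp (θ i / (i:ℝ))

variable (hg : Summable (fun j : ℕ => θ j / (j : ℝ)))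

include hθ in
lemma g_nonneg (j : ℕ) : 0 ≤ θ j / (j:ℝ) := by
  rcases Nat.eq_zero_or_pos j with h | h
  · simp [h]
  · exact div_nonneg (hθ j h).le (by positivity)

include hθ hg in
lemma sum_range_g_le (K : ℕ) :
    ∑ j : Fin K, θ ((j:ℕ)+1) / ((j:ℕ)+1 : ℝ) ≤ ∑' j : ℕ, θ j / (j:ℝ) := by
  rw [Fin.sum_univ_eq_sum_range (fun j => θ (j+1) / ((j:ℝ)+1))]
  have hg' : Summable (fun j : ℕ => θ (j+1) / ((j:ℝ)+1)) := by
    have := (summable_nat_add_iff 1).mpr hg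
    simpa using this
  have h1 : ∑ j ∈ Finset.range K, θ (j+1) / ((j:ℝ)+1) ≤ ∑' j : ℕ, θ (j+1) / ((j:ℝ)+1) :=
    Summable.sum_le_tsum _ (fun i _ => by exact_mod_cast g_nonneg θ hθ (i+1)) hg'
  have h2 : ∑' j : ℕ, θ j / (j:ℝ) = ∑' j : ℕ, θ (j+1) / ((j:ℝ)+1) := by
    rw [Summable.tsum_eq_zero_add hg]
    simp
  rw [h2]; exact h1

include hθ hg in
lemma partial_hcoef_le (K : ℕ) :
    ∑ n ∈ Finset.range (K+1), hcoef θ n ≤ Real.exp (∑' j : ℕ, θ j / (j:ℝ)) := by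
  rw [← sum_PF θ K]
  calc ∑ m ∈ PF K, w θ m
      ≤ ∑ m ∈ Finset.image (psi K) (Fintype.piFinset (fun _ : Fin K => Finset.range (K+1))), w θ m :=
        Finset.sum_le_sum_of_subset_of_nonneg (PF_subset_image K)
          (fun m _ _ => w_nonneg θ hθ m)
    _ = ∏ j : Fin K, ∑ m ∈ Finset.range (K+1), F θ ((j:ℕ)+1) m := (prod_eq_sum_image θ K (K)).symm
    _ ≤ ∏ j : Fin K, Real.exp (θ ((j:ℕ)+1) / ((j:ℕ)+1 : ℝ)) := by
        apply Finset.prod_le_prod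
        · intro j _
          exact Finset.sum_nonneg fun k _ => F_nonneg θ hθ _ k
        · intro j _
          exact sum_le_hasSum _ (fun k _ => F_nonneg θ hθ _ k) (by exact_mod_cast hasSum_exp_F θ ((j:ℕ)+1))
    _ = Real.exp (∑ j : Fin K, θ ((j:ℕ)+1) / ((j:ℕ)+1 : ℝ)) := by rw [Real.exp_sum]
    _ ≤ Real.exp (∑' j : ℕ, θ j / (j:ℝ)) := Real.exp_le_exp.mpr (sum_range_g_le θ hθ hg K)

include hθ hg in
lemma summable_hcoef : Summable (hcoef θ) := by
  apply summable_of_sum_range_le (c := Real.exp (∑' j : ℕ, θ j / (j:ℝ)))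
    (fun n => by rw [hcoef_eq]; exact Finset.sum_nonneg fun lam _ => w_nonneg θ hθ _)
  intro n
  calc ∑ i ∈ Finset.range n, hcoef θ i ≤ ∑ i ∈ Finset.range (n+1), hcoef θ i := by
        apply Finset.sum_le_sum_of_subset_of_nonneg (Finset.range_subset_range.mpr (Nat.le_succ n))
        intro i _ _
        rw [hcoef_eq]; exact Finset.sum_nonneg fun lam _ => w_nonneg θ hθ _
    _ ≤ _ := partial_hcoef_le θ hθ hg n

include hθ hg in
lemma tsum_hcoef_eq : ∑' n, hcoef θ n = Real.exp (∑' j : ℕ, θ j / (j:ℝ)) := by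
  apply le_antisymm
  · exact Summable.tsum_le_of_sum_range_le (summable_hcoef θ hθ hg) fun n => by
      rcases Nat.eq_zero_or_pos n with h | h
      · simp [h, Real.exp_pos, le_of_lt]
      · calc ∑ i ∈ Finset.range n, hcoef θ i ≤ ∑ i ∈ Finset.range (n+1), hcoef θ i := by
              apply Finset.sum_le_sum_of_subset_of_nonneg (Finset.range_subset_range.mpr (Nat.le_succ n))
              intro i _ _
              rw [hcoef_eq]; exact Finset.sum_nonneg fun lam _ => w_nonneg θ hθ _
          _ ≤ _ := partial_hcoef_le θ hθ hg n
  · -- lower bound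
    have key : ∀ N : ℕ, Real.exp (∑ j : Fin N, θ ((j:ℕ)+1) / ((j:ℕ)+1 : ℝ)) ≤ ∑' n, hcoef θ n := by
      intro N
      have hM : ∀ M : ℕ, ∏ j : Fin N, ∑ m ∈ Finset.range (M+1), F θ ((j:ℕ)+1) m ≤ ∑' n, hcoef θ n := by
        intro M
        rw [prod_eq_sum_image θ N M]
        calc ∑ m ∈ Finset.image (psi N) (Fintype.piFinset (fun _ : Fin N => Finset.range (M+1))), w θ m
            ≤ ∑ m ∈ PF (N*N*M), w θ m :=
              Finset.sum_le_sum_of_subset_of_nonneg (image_subset_PF N M)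
                (fun m _ _ => w_nonneg θ hθ m)
          _ = ∑ n ∈ Finset.range (N*N*M+1), hcoef θ n := sum_PF θ _
          _ ≤ ∑' n, hcoef θ n := Summable.sum_le_tsum _
              (fun i _ => by rw [hcoef_eq]; exact Finset.sum_nonneg fun lam _ => w_nonneg θ hθ _)
              (summable_hcoef θ hθ hg)
      have hlim : Filter.Tendsto (fun M : ℕ => ∏ j : Fin N, ∑ m ∈ Finset.range (M+1), F θ ((j:ℕ)+1) m)
          Filter.atTop (nhds (∏ j : Fin N, Real.exp (θ ((j:ℕ)+1) / ((j:ℕ)+1 : ℝ)))) := by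
        apply tendsto_finset_prod
        intro j _
        have h1 := (hasSum_exp_F θ ((j:ℕ)+1)).tendsto_sum_nat
        have h2 := h1.comp (Filter.tendsto_add_atTop_nat 1)
        exact_mod_cast h2
      rw [Real.exp_sum]
      exact le_of_tendsto' hlim hM
    have hlim2 : Filter.Tendsto (fun N : ℕ => Real.exp (∑ j : Fin N, θ ((j:ℕ)+1) / ((j:ℕ)+1 : ℝ)))
        Filter.atTop (nhds (Real.exp (∑' j : ℕ, θ j / (j:ℝ)))) := by
      apply Real.continuous_exp.continuousAt.tendsto.comp
      have hg' : Summable (fun j : ℕ => θ (j+1) / ((j:ℝ)+1)) := by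
        have := (summable_nat_add_iff 1).mpr hg
        simpa using this
      have h2 : ∑' j : ℕ, θ j / (j:ℝ) = ∑' j : ℕ, θ (j+1) / ((j:ℝ)+1) := by
        rw [Summable.tsum_eq_zero_add hg]
        simp
      rw [h2]
      have := hg'.hasSum.tendsto_sum_nat
      simp_rw [Fin.sum_univ_eq_sum_range (fun j => θ (j+1) / ((j:ℝ)+1))]
      exact_mod_cast this
    exact le_of_tendsto' hlim2 key

end

section B4
variable (θ : ℕ → ℝ) (hθ : ∀ j : ℕ, 1 ≤ j → 0 < θ j)
  (hratio : Filter.Tendsto (fun n : ℕ => θ (n + 1) / θ n) Filter.atTop (nhds 1))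

include hθ hratio in
lemma ratio_inv : Tendsto (fun m : ℕ => θ m / θ (m+1)) atTop (nhds 1) := by
  have h := hratio.inv₀ one_ne_zero
  rw [inv_one] at h
  apply h.congr'
  filter_upwards [eventually_ge_atTop 1] with m hm
  simp

include hθ hratio in
lemma ratio_k (k : ℕ) : Tendsto (fun m : ℕ => θ m / θ (m+k)) atTop (nhds 1) := by
  induction k with
  | zero =>
    apply (tendsto_const_nhds (x := (1:ℝ))).congr'
    filter_upwards [eventually_ge_atTop 1] with m hm
    simp [Nat.add_zero, div_self (ne_of_gt (hθ m hm))]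
  | succ k ih =>
    have h2 := (ratio_inv θ hθ hratio).comp (tendsto_add_atTop_nat k)
    have h3 := ih.mul h2
    rw [mul_one] at h3
    apply h3.congr'
    filter_upwards [eventually_ge_atTop 1] with m hm
    have hne : θ (m+k) ≠ 0 := ne_of_gt (hθ (m+k) (by omega))
    show θ m / θ (m+k) * (θ (m+k) / θ (m+k+1)) = θ m / θ (m + (k+1))
    field_simp
    ring_nf

include hθ hratio in
lemma ratio_sub (k : ℕ) : Tendsto (fun n : ℕ => θ (n-k) / θ n) atTop (nhds 1) := by
  have h := (ratio_k θ hθ hratio k).comp (tendsto_sub_atTop_nat k)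
  apply h.congr'
  filter_upwards [eventually_ge_atTop k] with n hn
  show θ (n-k) / θ (n-k+k) = θ (n-k)/θ n
  rw [Nat.sub_add_cancel hn]

variable (c : ℕ → ℝ) (hc : ∀ n j : ℕ, 1 ≤ j → 2 * j ≤ n → θ (n - j) / θ n ≤ c j)

include hθ hratio hc in
lemma c_ge_one (j : ℕ) (hj : 1 ≤ j) : 1 ≤ c j := by
  apply le_of_tendsto (ratio_sub θ hθ hratio j)
  filter_upwards [eventually_ge_atTop (2*j)] with n hn
  exact hc n j hj hn

include hθ hratio hc in
lemma summable_g (hsum : Summable (fun j : ℕ => θ j * c j / (j : ℝ))) :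
    Summable (fun j : ℕ => θ j / (j : ℝ)) := by
  apply Summable.of_nonneg_of_le _ _ hsum
  · intro j
    rcases Nat.eq_zero_or_pos j with h | h
    · simp [h]
    · exact div_nonneg (hθ j h).le (by positivity)
  · intro j
    rcases Nat.eq_zero_or_pos j with h | h
    · simp [h]
    · apply div_le_div_of_nonneg_right _ (by positivity)
      nlinarith [hθ j h, c_ge_one θ hθ hratio c hc j h]

end B4

/-- Kronecker-type lemma -/
lemma kron (a : ℕ → ℝ) (ha : ∀ j, 1 ≤ j → 0 ≤ a j) (hs : Summable (fun j : ℕ => a j / (j:ℝ))) :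
    Tendsto (fun n : ℕ => (∑ j ∈ Finset.Icc 1 n, a j) / n) atTop (nhds 0) := by
  have hf0 : ∀ j : ℕ, 0 ≤ a j / (j:ℝ) := by
    intro j
    rcases Nat.eq_zero_or_pos j with h | h
    · simp [h]
    · exact div_nonneg (ha j h) (by positivity)
  rw [Metric.tendsto_atTop]
  intro ε hε
  have htail := tendsto_sum_nat_add (fun j : ℕ => a j / (j:ℝ))
  rw [Metric.tendsto_atTop] at htail
  obtain ⟨J0, hJ0⟩ := htail (ε/2) (by linarith)
  set J := J0 + 1 with hJdef
  have hJ : |∑' (k : ℕ), a (k + J) / ((k + J : ℕ):ℝ)| < ε/2 := by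
    have := hJ0 J (by omega)
    simpa using this
  have hsumJ : Summable (fun k : ℕ => a (k + J) / ((k + J : ℕ):ℝ)) :=
    ((summable_nat_add_iff J).mpr hs)
  have htail_le : ∀ n : ℕ, ∑ j ∈ Finset.Icc J n, a j / (j:ℝ) ≤ ε/2 := by
    intro n
    have h1 : ∑ j ∈ Finset.Icc J n, a j / (j:ℝ) = ∑ k ∈ Finset.range (n+1-J), a (J+k) / ((J+k : ℕ):ℝ) := by
      rw [← Finset.Ico_add_one_right_eq_Icc, Finset.sum_Ico_eq_sum_range]
    rw [h1]
    have h2 : ∑ k ∈ Finset.range (n+1-J), a (J+k) / ((J+k:ℕ):ℝ)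
        = ∑ k ∈ Finset.range (n+1-J), a (k+J) / ((k+J:ℕ):ℝ) := by
      apply Finset.sum_congr rfl
      intro k _
      rw [Nat.add_comm]
    rw [h2]
    calc ∑ k ∈ Finset.range (n+1-J), a (k+J) / ((k+J:ℕ):ℝ)
        ≤ ∑' (k:ℕ), a (k+J) / ((k+J:ℕ):ℝ) := Summable.sum_le_tsum _ (fun i _ => hf0 _) hsumJ
      _ ≤ |∑' (k:ℕ), a (k+J) / ((k+J:ℕ):ℝ)| := le_abs_self _
      _ ≤ ε/2 := hJ.le
  set C := ∑ j ∈ Finset.Icc 1 (J-1), a j with hC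
  have hCnn : 0 ≤ C := Finset.sum_nonneg fun j hj => ha j (Finset.mem_Icc.mp hj).1
  obtain ⟨N1, hN1⟩ := (eventually_atTop).mp
    ((tendsto_natCast_atTop_atTop (R := ℝ)).eventually_ge_atTop (2*C/ε + 1))
  refine ⟨max N1 (max J 1), fun n hn => ?_⟩
  have hnJ : J ≤ n := le_trans (le_max_left _ _) (le_of_max_le_right hn)
  have hn1 : 1 ≤ n := le_trans (le_max_right _ _) (le_of_max_le_right hn)
  have hnN1 : N1 ≤ n := le_of_max_le_left hn
  have hnR : (0:ℝ) < n := by exact_mod_cast hn1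
  rw [Real.dist_eq, sub_zero]
  have hsplit : Finset.Icc 1 n = Finset.Icc 1 (J-1) ∪ Finset.Icc J n := by
    ext i
    simp only [Finset.mem_union, Finset.mem_Icc]
    omega
  have hdisj : Disjoint (Finset.Icc 1 (J-1)) (Finset.Icc J n) := by
    rw [Finset.disjoint_left]
    intro i h1 h2
    rw [Finset.mem_Icc] at h1 h2
    omega
  have hsum_split : ∑ j ∈ Finset.Icc 1 n, a j = C + ∑ j ∈ Finset.Icc J n, a j := by
    rw [hsplit, Finset.sum_union hdisj]
  have hbound2 : ∑ j ∈ Finset.Icc J n, a j ≤ n * (ε/2) := by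
    calc ∑ j ∈ Finset.Icc J n, a j ≤ ∑ j ∈ Finset.Icc J n, (n:ℝ) * (a j / (j:ℝ)) := by
          apply Finset.sum_le_sum
          intro j hj
          rw [Finset.mem_Icc] at hj
          have hj1 : 1 ≤ j := by omega
          have hjn : (j:ℝ) ≤ (n:ℝ) := by exact_mod_cast hj.2
          have hjpos : (0:ℝ) < j := by exact_mod_cast hj1
          rw [mul_div_assoc']
          rw [le_div_iff₀ hjpos]
          apply mul_le_mul_of_nonneg_left hjn (ha j hj1) |>.trans_eq (mul_comm _ _)
      _ = (n:ℝ) * ∑ j ∈ Finset.Icc J n, a j / (j:ℝ) := by rw [Finset.mul_sum]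
      _ ≤ (n:ℝ) * (ε/2) := by
          apply mul_le_mul_of_nonneg_left (htail_le n) hnR.le
  have hnonneg : 0 ≤ ∑ j ∈ Finset.Icc 1 n, a j :=
    Finset.sum_nonneg fun j hj => ha j (Finset.mem_Icc.mp hj).1
  rw [abs_of_nonneg (div_nonneg hnonneg hnR.le)]
  rw [div_lt_iff₀ hnR]
  have hNn : 2*C/ε + 1 ≤ (n:ℝ) := hN1 n hnN1
  have hCn : C < ε/2 * n := by
    rw [div_add' _ _ _ (ne_of_gt hε)] at hNn
    rw [div_le_iff₀ hε] at hNn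
    nlinarith
  calc ∑ j ∈ Finset.Icc 1 n, a j = C + ∑ j ∈ Finset.Icc J n, a j := hsum_split
    _ ≤ C + n * (ε/2) := by linarith
    _ < ε/2 * n + n * (ε/2) := by linarith
    _ = ε * n := by ring

section B5
variable (θ : ℕ → ℝ) (hθ : ∀ j : ℕ, 1 ≤ j → 0 < θ j)
  (c : ℕ → ℝ) (hcb : ∀ n j : ℕ, 1 ≤ j → 2 * j ≤ n → θ (n - j) / θ n ≤ c j)
  (hgec : ∀ j : ℕ, 1 ≤ j → 1 ≤ c j)
  (hsum : Summable (fun j : ℕ => θ j * c j / (j : ℝ)))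


include hθ hgec hsum in
lemma exists_K : ∃ K : ℕ, 1 ≤ K ∧
    ∀ s : Finset ℕ, (∀ j ∈ s, K ≤ j) → ∑ j ∈ s, θ j * c j / (j:ℝ) ≤ 1/4 := by
  have hf0 : ∀ j : ℕ, 0 ≤ θ j * c j / (j:ℝ) := by
    intro j
    rcases Nat.eq_zero_or_pos j with h | h
    · simp [h]
    · have := hθ j h; have := hgec j h; positivity
  have htail := tendsto_sum_nat_add (fun j : ℕ => θ j * c j / (j:ℝ))
  rw [Metric.tendsto_atTop] at htail
  obtain ⟨J0, hJ0⟩ := htail (1/4) (by norm_num)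
  refine ⟨J0 + 1, by omega, fun s hs => ?_⟩
  have hJ : |∑' (k : ℕ), θ (k+J0) * c (k+J0) / ((k+J0:ℕ):ℝ)| < 1/4 := by
    have := hJ0 J0 le_rfl
    simpa [Real.dist_eq] using this
  have hsummJ : Summable (fun k : ℕ => θ (k+J0) * c (k+J0) / ((k+J0:ℕ):ℝ)) :=
    (summable_nat_add_iff J0).mpr hsum
  have himg : ∑ j ∈ s, θ j * c j / (j:ℝ)
      = ∑ k ∈ s.image (fun j => j - J0), θ (k+J0) * c (k+J0) / ((k+J0:ℕ):ℝ) := by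
    rw [Finset.sum_image]
    · apply Finset.sum_congr rfl
      intro j hj
      have : j - J0 + J0 = j := by have := hs j hj; omega
      rw [this]
    · intro x hx y hy hxy
      have hx' := hs x hx; have hy' := hs y hy
      simp only at hxy
      omega
  rw [himg]
  calc ∑ k ∈ s.image (fun j => j - J0), θ (k+J0) * c (k+J0) / ((k+J0:ℕ):ℝ)
      ≤ ∑' (k : ℕ), θ (k+J0) * c (k+J0) / ((k+J0:ℕ):ℝ) :=
        Summable.sum_le_tsum _ (fun i _ => hf0 _) hsummJ
    _ ≤ |∑' (k : ℕ), θ (k+J0) * c (k+J0) / ((k+J0:ℕ):ℝ)| := le_abs_self _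
    _ ≤ 1/4 := hJ.le

include hθ hgec hsum in
lemma exists_n0 : ∃ n0 : ℕ, 2 ≤ n0 ∧
    ∀ n, n0 ≤ n → (∑ j ∈ Finset.Icc 1 n, θ j * c j) / (n:ℝ) ≤ 1/8 := by
  have h := kron (fun j => θ j * c j)
    (fun j hj => by have := hθ j hj; have := hgec j hj; positivity) hsum
  rw [Metric.tendsto_atTop] at h
  obtain ⟨N, hN⟩ := h (1/8) (by norm_num)
  refine ⟨max N 2, by omega, fun n hn => ?_⟩
  have := hN n (le_trans (le_max_left _ _) hn)
  rw [Real.dist_eq, sub_zero] at this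
  calc (∑ j ∈ Finset.Icc 1 n, θ j * c j) / (n:ℝ)
      ≤ |(∑ j ∈ Finset.Icc 1 n, θ j * c j) / (n:ℝ)| := le_abs_self _
    _ ≤ 1/8 := this.le

include hθ hcb hgec hsum in
lemma exists_B : ∃ B : ℝ, 1 ≤ B ∧ ∀ n : ℕ, 1 ≤ n → (n:ℝ) * hcoef θ n ≤ B * θ n := by
  obtain ⟨K, hK1, hKtail⟩ := exists_K θ hθ c hgec hsum
  obtain ⟨n0, hn02, hn0⟩ := exists_n0 θ hθ c hgec hsum
  set A := ∑ k ∈ Finset.Icc 1 (K-1), c k * hcoef θ k with hA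
  have hAnn : 0 ≤ A := Finset.sum_nonneg fun k hk => by
    rw [Finset.mem_Icc] at hk
    have h1 := hgec k hk.1
    have h2 := hcoef_nonneg θ hθ k
    nlinarith
  set B0 := ∑ m ∈ Finset.Icc 1 n0, (m:ℝ) * hcoef θ m / θ m with hB0
  have hterm_nn : ∀ m ∈ Finset.Icc 1 n0, 0 ≤ (m:ℝ) * hcoef θ m / θ m := fun m hm => by
    rw [Finset.mem_Icc] at hm
    have := hθ m hm.1
    have := hcoef_nonneg θ hθ m
    positivity
  set B := max 1 (max (2*(1+A)) B0) with hB
  have hB1 : (1:ℝ) ≤ B := le_max_left _ _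
  have hB2A : 2*(1+A) ≤ B := le_trans (le_max_left _ _) (le_max_right _ _)
  have hBB0 : B0 ≤ B := le_trans (le_max_right _ _) (le_max_right _ _)
  clear_value A B0 B
  refine ⟨B, hB1, fun n => ?_⟩
  induction n using Nat.strong_induction_on with
  | _ n IH =>
  intro hn1
  rcases le_or_gt n n0 with hsmall | hbig
  · -- small case
    have hmem : n ∈ Finset.Icc 1 n0 := Finset.mem_Icc.mpr ⟨hn1, hsmall⟩
    have h1 : (n:ℝ) * hcoef θ n / θ n ≤ B0 := by
      rw [hB0]; exact Finset.single_le_sum hterm_nn hmem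
    have hθn := hθ n hn1
    calc (n:ℝ) * hcoef θ n = ((n:ℝ) * hcoef θ n / θ n) * θ n := by
          field_simp
      _ ≤ B0 * θ n := mul_le_mul_of_nonneg_right h1 hθn.le
      _ ≤ B * θ n := mul_le_mul_of_nonneg_right hBB0 hθn.le
  · -- large case
    have hθn := hθ n hn1
    have hn2 : 2 ≤ n := by omega
    rw [hcoef_rec θ n hn1]
    have hsplit := Finset.sum_filter_add_sum_filter_not (Finset.Icc 1 n)
      (fun j => 2*j ≤ n) (fun j => θ j * hcoef θ (n - j))
    rw [← hsplit]
    set S1 := (Finset.Icc 1 n).filter (fun j => 2*j ≤ n) with hS1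
    set S2 := (Finset.Icc 1 n).filter (fun j => ¬ 2*j ≤ n) with hS2
    clear_value S1 S2
    have hnS2 : n ∈ S2 := by
      rw [hS2, Finset.mem_filter, Finset.mem_Icc]
      omega
    -- bound on S1
    have hbound1 : ∑ j ∈ S1, θ j * hcoef θ (n-j) ≤ B * θ n / 4 := by
      have hstep : ∀ j ∈ S1, θ j * hcoef θ (n-j) ≤ (2*B/(n:ℝ)) * (θ j * c j) * θ n := by
        intro j hj
        rw [hS1, Finset.mem_filter, Finset.mem_Icc] at hj
        obtain ⟨⟨hj1, hjn⟩, hj2⟩ := hj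
        set m := n - j with hm
        have hm1 : 1 ≤ m := by omega
        have hmn : m < n := by omega
        have h2m : (n:ℝ) ≤ 2 * m := by
          have : n ≤ 2*m := by omega
          exact_mod_cast this
        have hIH := IH m hmn hm1
        have hθm := hθ m hm1
        have hθj := hθ j hj1
        have hmpos : (0:ℝ) < m := by exact_mod_cast hm1
        have hhm : hcoef θ m ≤ B * θ m / m := by
          rw [le_div_iff₀ hmpos]
          calc hcoef θ m * m = m * hcoef θ m := mul_comm _ _
            _ ≤ B * θ m := hIH
        have hcm : θ m / θ n ≤ c j := hcb n j hj1 hj2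
        have hθmc : θ m ≤ c j * θ n := by
          rw [div_le_iff₀ hθn] at hcm
          linarith
        have hcj0 : 0 < c j := lt_of_lt_of_le one_pos (hgec j hj1)
        have hnpos : (0:ℝ) < n := by exact_mod_cast hn1
        calc θ j * hcoef θ (n-j) = θ j * hcoef θ m := by rw [hm]
          _ ≤ θ j * (B * θ m / m) := mul_le_mul_of_nonneg_left hhm hθj.le
          _ ≤ θ j * (B * (c j * θ n) / m) := by
              apply mul_le_mul_of_nonneg_left _ hθj.le
              apply div_le_div_of_nonneg_right _ hmpos.le
              nlinarith
          _ ≤ (2*B/(n:ℝ)) * (θ j * c j) * θ n := by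
              have hfac : 0 ≤ B * θ j * c j * θ n := by positivity
              have hL : θ j * (B * (c j * θ n) / (m:ℝ)) = (B * θ j * c j * θ n) / m := by ring
              have hR : 2*B/(n:ℝ) * (θ j * c j) * θ n = (2 * (B * θ j * c j * θ n)) / n := by ring
              rw [hL, hR, div_le_div_iff₀ hmpos hnpos]
              nlinarith
      calc ∑ j ∈ S1, θ j * hcoef θ (n-j) ≤ ∑ j ∈ S1, (2*B/(n:ℝ)) * (θ j * c j) * θ n :=
            Finset.sum_le_sum hstep
        _ = (2*B/(n:ℝ)) * θ n * ∑ j ∈ S1, θ j * c j := by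
            rw [Finset.mul_sum]; exact Finset.sum_congr rfl fun j _ => by ring
        _ ≤ (2*B/(n:ℝ)) * θ n * ∑ j ∈ Finset.Icc 1 n, θ j * c j := by
            apply mul_le_mul_of_nonneg_left
            · rw [hS1]
              apply Finset.sum_le_sum_of_subset_of_nonneg (Finset.filter_subset _ _)
              intro j hj _
              rw [Finset.mem_Icc] at hj
              have := hθ j hj.1; have := hgec j hj.1
              nlinarith
            · have hnpos : (0:ℝ) < n := by exact_mod_cast hn1
              positivity
        _ ≤ B * θ n / 4 := by
            have hnpos : (0:ℝ) < n := by exact_mod_cast hn1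
            have hD := hn0 n (by omega)
            have hDnn : 0 ≤ ∑ j ∈ Finset.Icc 1 n, θ j * c j := by
              apply Finset.sum_nonneg
              intro j hj
              rw [Finset.mem_Icc] at hj
              have := hθ j hj.1; have := hgec j hj.1
              nlinarith
            have h1 : (2*B/(n:ℝ)) * θ n * ∑ j ∈ Finset.Icc 1 n, θ j * c j
                = 2 * B * θ n * ((∑ j ∈ Finset.Icc 1 n, θ j * c j) / n) := by
              field_simp
            rw [h1]
            calc 2 * B * θ n * ((∑ j ∈ Finset.Icc 1 n, θ j * c j) / n)
                ≤ 2 * B * θ n * (1/8) := by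
                  apply mul_le_mul_of_nonneg_left hD
                  positivity
              _ = B * θ n / 4 := by ring
    -- bound on S2
    have hbound2 : ∑ j ∈ S2, θ j * hcoef θ (n-j) ≤ θ n * (A + B/4) + θ n := by
      rw [← Finset.sum_erase_add _ _ hnS2]
      have hlast : θ n * hcoef θ (n - n) = θ n := by
        simp [hcoef_zero]
      rw [hlast]
      apply add_le_add_left
      -- per-term bound then reindex
      have hstep : ∀ j ∈ S2.erase n, θ j * hcoef θ (n-j) ≤ θ n * (c (n-j) * hcoef θ (n-j)) := by
        intro j hj
        obtain ⟨hjne, hjS2⟩ := Finset.mem_erase.mp hj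
        rw [hS2, Finset.mem_filter, Finset.mem_Icc] at hjS2
        obtain ⟨⟨hj1, hjn⟩, hj2⟩ := hjS2
        set k := n - j with hk
        have hk1 : 1 ≤ k := by omega
        have hk2 : 2*k ≤ n := by omega
        have hjeq : n - k = j := by omega
        have hcm : θ j / θ n ≤ c k := by
          have := hcb n k hk1 hk2
          rw [hjeq] at this
          exact this
        have hθjle : θ j ≤ c k * θ n := by
          rw [div_le_iff₀ hθn] at hcm
          linarith
        have hh := hcoef_nonneg θ hθ k
        calc θ j * hcoef θ k ≤ (c k * θ n) * hcoef θ k := mul_le_mul_of_nonneg_right hθjle hh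
          _ = θ n * (c k * hcoef θ k) := by ring
      have hinj : ∀ x ∈ S2.erase n, ∀ y ∈ S2.erase n, n - x = n - y → x = y := by
        intro x hx y hy hxy
        obtain ⟨_, hx2⟩ := Finset.mem_erase.mp hx
        obtain ⟨_, hy2⟩ := Finset.mem_erase.mp hy
        rw [hS2, Finset.mem_filter, Finset.mem_Icc] at hx2 hy2
        omega
      have himg : ∑ j ∈ S2.erase n, c (n-j) * hcoef θ (n-j)
          = ∑ k ∈ (S2.erase n).image (fun j => n - j), c k * hcoef θ k :=
        by rw [Finset.sum_image hinj]
      have hEfacts : ∀ k ∈ (S2.erase n).image (fun j => n - j), 1 ≤ k ∧ k < n ∧ 2*k ≤ n := by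
        intro k hk
        rw [Finset.mem_image] at hk
        obtain ⟨j, hj, rfl⟩ := hk
        obtain ⟨hjne, hj2⟩ := Finset.mem_erase.mp hj
        rw [hS2, Finset.mem_filter, Finset.mem_Icc] at hj2
        omega
      set E := (S2.erase n).image (fun j => n - j) with hE
      clear_value E
      have hsplitE := Finset.sum_filter_add_sum_filter_not E (fun k => k < K)
        (fun k => c k * hcoef θ k)
      have hbE1 : ∑ k ∈ E.filter (fun k => k < K), c k * hcoef θ k ≤ A := by
        rw [hA]
        apply Finset.sum_le_sum_of_subset_of_nonneg
        · intro k hk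
          rw [Finset.mem_filter] at hk
          obtain ⟨hkE, hkK⟩ := hk
          have := hEfacts k hkE
          rw [Finset.mem_Icc]
          omega
        · intro k hk _
          rw [Finset.mem_Icc] at hk
          have := hgec k hk.1
          have := hcoef_nonneg θ hθ k
          nlinarith
      have hbE2 : ∑ k ∈ E.filter (fun k => ¬ k < K), c k * hcoef θ k ≤ B * (1/4) := by
        have hper : ∀ k ∈ E.filter (fun k => ¬ k < K), c k * hcoef θ k ≤ B * (θ k * c k / k) := by
          intro k hk
          rw [Finset.mem_filter] at hk
          obtain ⟨hkE, hkK⟩ := hk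
          obtain ⟨hk1, hkn, _⟩ := hEfacts k hkE
          have hIH := IH k hkn hk1
          have hkpos : (0:ℝ) < k := by exact_mod_cast hk1
          have hhk : hcoef θ k ≤ B * θ k / k := by
            rw [le_div_iff₀ hkpos]
            calc hcoef θ k * k = k * hcoef θ k := mul_comm _ _
              _ ≤ B * θ k := hIH
          have hck : 0 < c k := lt_of_lt_of_le one_pos (hgec k hk1)
          calc c k * hcoef θ k ≤ c k * (B * θ k / k) := mul_le_mul_of_nonneg_left hhk hck.le
            _ = B * (θ k * c k / k) := by field_simp
        calc ∑ k ∈ E.filter (fun k => ¬ k < K), c k * hcoef θ k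
            ≤ ∑ k ∈ E.filter (fun k => ¬ k < K), B * (θ k * c k / k) := Finset.sum_le_sum hper
          _ = B * ∑ k ∈ E.filter (fun k => ¬ k < K), θ k * c k / k := by rw [Finset.mul_sum]
          _ ≤ B * (1/4) := by
              apply mul_le_mul_of_nonneg_left _ (by linarith)
              apply hKtail
              intro k hk
              rw [Finset.mem_filter] at hk
              omega
      calc ∑ j ∈ S2.erase n, θ j * hcoef θ (n-j)
          ≤ ∑ j ∈ S2.erase n, θ n * (c (n-j) * hcoef θ (n-j)) := Finset.sum_le_sum hstep
        _ = θ n * ∑ j ∈ S2.erase n, c (n-j) * hcoef θ (n-j) := by rw [Finset.mul_sum]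
        _ = θ n * ∑ k ∈ E, c k * hcoef θ k := by rw [himg]
        _ = θ n * (∑ k ∈ E.filter (fun k => k < K), c k * hcoef θ k
              + ∑ k ∈ E.filter (fun k => ¬ k < K), c k * hcoef θ k) := by rw [hsplitE]
        _ ≤ θ n * (A + B * (1/4)) := by
            apply mul_le_mul_of_nonneg_left _ hθn.le
            exact add_le_add hbE1 hbE2
        _ = θ n * (A + B/4) := by ring
    calc ∑ j ∈ S1, θ j * hcoef θ (n-j) + ∑ j ∈ S2, θ j * hcoef θ (n-j)
        ≤ B * θ n / 4 + (θ n * (A + B/4) + θ n) := add_le_add hbound1 hbound2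
      _ = θ n * (1 + A + B/2) := by ring
      _ ≤ θ n * B := by
          apply mul_le_mul_of_nonneg_left _ hθn.le
          linarith
      _ = B * θ n := mul_comm _ _

end B5
end Aux

/-- Theorem 2.5: asymptotics of the single-site normalization `h_n` for
subexponential weights: `n h_n / θ_n → exp(Σ_{j≥1} θ_j/j)`. -/
theorem statement5 (θ : ℕ → ℝ) (hθ : ∀ j : ℕ, 1 ≤ j → 0 < θ j)
    (hratio : Filter.Tendsto (fun n : ℕ => θ (n + 1) / θ n) Filter.atTop (nhds 1))
    (c : ℕ → ℝ)
    (hc : ∀ n j : ℕ, 1 ≤ j → 2 * j ≤ n → θ (n - j) / θ n ≤ c j)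
    (hsum : Summable (fun j : ℕ => θ j * c j / (j : ℝ))) :
    Summable (fun j : ℕ => θ j / (j : ℝ)) ∧
    Filter.Tendsto (fun n : ℕ => (n : ℝ) * hcoef θ n / θ n) Filter.atTop
      (nhds (Real.exp (∑' j : ℕ, θ j / (j : ℝ)))) := by
  have hg : Summable (fun j : ℕ => θ j / (j : ℝ)) := summable_g θ hθ hratio c hc hsum
  have hgec : ∀ j : ℕ, 1 ≤ j → 1 ≤ c j := c_ge_one θ hθ hratio c hc
  obtain ⟨B, hB1, hBb⟩ := exists_B θ hθ c hc hgec hsum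
  refine ⟨hg, ?_⟩
  set f : ℕ → ℕ → ℝ := fun n k => if 2*k ≤ n ∧ k < n then (θ (n-k)/θ n) * hcoef θ k else 0
    with hf
  set bound : ℕ → ℝ := fun k => if k = 0 then 1 else c k * hcoef θ k with hbounddef
  have hboundnn : ∀ k, 0 ≤ bound k := by
    intro k
    simp only [hbounddef]
    split_ifs with h
    · norm_num
    · have hk : 1 ≤ k := by omega
      have := hgec k hk
      have := hcoef_nonneg θ hθ k
      nlinarith
  have hbound_sum : Summable bound := by
    rw [← summable_nat_add_iff 1]
    have heq : ∀ k : ℕ, bound (k+1) = c (k+1) * hcoef θ (k+1) := by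
      intro k; simp [hbounddef]
    have hnn : ∀ k : ℕ, 0 ≤ c (k+1) * hcoef θ (k+1) := by
      intro k
      have := hgec (k+1) (by omega)
      have := hcoef_nonneg θ hθ (k+1)
      nlinarith
    apply Summable.congr _ (fun k => (heq k).symm)
    have hle : ∀ k : ℕ, c (k+1) * hcoef θ (k+1) ≤ B * (θ (k+1) * c (k+1) / ((k+1:ℕ):ℝ)) := by
      intro k
      have hk1 : 1 ≤ k + 1 := by omega
      have hkpos : (0:ℝ) < ((k+1:ℕ):ℝ) := by exact_mod_cast hk1
      have hIH := hBb (k+1) hk1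
      have hhk : hcoef θ (k+1) ≤ B * θ (k+1) / ((k+1:ℕ):ℝ) := by
        rw [le_div_iff₀ hkpos]
        calc hcoef θ (k+1) * ((k+1:ℕ):ℝ) = ((k+1:ℕ):ℝ) * hcoef θ (k+1) := mul_comm _ _
          _ ≤ B * θ (k+1) := hIH
      have hck : 0 < c (k+1) := lt_of_lt_of_le one_pos (hgec (k+1) hk1)
      calc c (k+1) * hcoef θ (k+1) ≤ c (k+1) * (B * θ (k+1) / ((k+1:ℕ):ℝ)) :=
            mul_le_mul_of_nonneg_left hhk hck.le
        _ = B * (θ (k+1) * c (k+1) / ((k+1:ℕ):ℝ)) := by field_simp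
    exact Summable.of_nonneg_of_le hnn hle (((summable_nat_add_iff 1).mpr hsum).mul_left B)
  have hlim_pt : ∀ k, Tendsto (fun n => f n k) atTop (nhds (hcoef θ k)) := by
    intro k
    have h1 := (ratio_sub θ hθ hratio k).mul_const (hcoef θ k)
    rw [one_mul] at h1
    apply h1.congr'
    filter_upwards [eventually_ge_atTop (2*k+1)] with n hn
    simp only [hf]
    rw [if_pos (⟨by omega, by omega⟩ : 2*k ≤ n ∧ k < n)]
  have hdom : ∀ n : ℕ, ∀ k, ‖f n k‖ ≤ bound k := by
    intro n k
    simp only [hf]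
    split_ifs with hcond
    · obtain ⟨h2k, hkn⟩ := hcond
      rcases Nat.eq_zero_or_pos k with hk0 | hk1
      · subst hk0
        have hn1 : 1 ≤ n := by omega
        have : θ (n - 0) / θ n * hcoef θ 0 = 1 := by
          rw [Nat.sub_zero, hcoef_zero, div_self (ne_of_gt (hθ n hn1)), mul_one]
        rw [this]
        simp [hbounddef]
      · have hn1 : 1 ≤ n := by omega
        have hnk1 : 1 ≤ n - k := by omega
        have hθn := hθ n hn1
        have hθnk := hθ (n-k) hnk1
        have hh := hcoef_nonneg θ hθ k
        have hv : 0 ≤ θ (n-k)/θ n * hcoef θ k := by positivity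
        rw [Real.norm_eq_abs, abs_of_nonneg hv]
        simp only [hbounddef]
        rw [if_neg (by omega : ¬ k = 0)]
        have := hc n k hk1 h2k
        apply mul_le_mul_of_nonneg_right this hh
    · rw [norm_zero]
      exact hboundnn k
  have htsum : Tendsto (fun n => ∑' k, f n k) atTop (nhds (∑' k, hcoef θ k)) :=
    tendsto_tsum_of_dominated_convergence hbound_sum hlim_pt (Eventually.of_forall hdom)
  -- identify the tsum with the finite sum
  have hTn : ∀ n : ℕ, ∑' k, f n k
      = ∑ k ∈ (Finset.range n).filter (fun k => 2*k ≤ n), (θ (n-k)/θ n) * hcoef θ k := by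
    intro n
    rw [tsum_eq_sum (s := (Finset.range n).filter (fun k => 2*k ≤ n)) ?_]
    · apply Finset.sum_congr rfl
      intro k hk
      rw [Finset.mem_filter, Finset.mem_range] at hk
      simp only [hf]
      rw [if_pos (⟨hk.2, hk.1⟩ : 2*k ≤ n ∧ k < n)]
    · intro k hk
      rw [Finset.mem_filter, Finset.mem_range] at hk
      simp only [hf]
      rw [if_neg (by tauto)]
  set R : ℕ → ℝ := fun n =>
    ∑ k ∈ (Finset.range n).filter (fun k => ¬ 2*k ≤ n), (θ (n-k)/θ n) * hcoef θ k with hR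
  have hRnn : ∀ n, 0 ≤ R n := by
    intro n
    simp only [hR]
    apply Finset.sum_nonneg
    intro k hk
    rw [Finset.mem_filter, Finset.mem_range] at hk
    have hn1 : 1 ≤ n := by omega
    have hnk1 : 1 ≤ n - k := by omega
    have := hθ n hn1; have := hθ (n-k) hnk1; have := hcoef_nonneg θ hθ k
    positivity
  have hRle : ∀ n : ℕ, 1 ≤ n → R n ≤ 2*B*((∑ j ∈ Finset.Icc 1 n, θ j * c j)/(n:ℝ)) := by
    intro n hn1
    have hθn := hθ n hn1
    have hnpos : (0:ℝ) < n := by exact_mod_cast hn1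
    have hstep : ∀ k ∈ (Finset.range n).filter (fun k => ¬ 2*k ≤ n),
        (θ (n-k)/θ n) * hcoef θ k ≤ (2*B/(n:ℝ)) * (θ (n-k) * c (n-k)) := by
      intro k hk
      rw [Finset.mem_filter, Finset.mem_range] at hk
      obtain ⟨hkn, h2k⟩ := hk
      have hk1 : 1 ≤ k := by omega
      set j := n - k with hj
      have hj1 : 1 ≤ j := by omega
      have h2j : 2*j ≤ n := by omega
      have hθj := hθ j hj1
      have hθk := hθ k hk1
      have hkpos : (0:ℝ) < k := by exact_mod_cast hk1
      have hIH := hBb k (by omega)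
      have hhk : hcoef θ k ≤ B * θ k / (k:ℝ) := by
        rw [le_div_iff₀ hkpos]
        calc hcoef θ k * (k:ℝ) = (k:ℝ) * hcoef θ k := mul_comm _ _
          _ ≤ B * θ k := hIH
      have hck : θ k ≤ c j * θ n := by
        have h1 : θ (n - j) / θ n ≤ c j := hc n j hj1 h2j
        have h2 : n - j = k := by omega
        rw [h2, div_le_iff₀ hθn] at h1
        linarith
      have hcj : 0 < c j := lt_of_lt_of_le one_pos (hgec j hj1)
      have h2kn : (n:ℝ) ≤ 2*k := by
        have : n ≤ 2*k := by omega
        exact_mod_cast this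
      calc (θ j/θ n) * hcoef θ k ≤ (θ j/θ n) * (B * θ k / (k:ℝ)) := by
            apply mul_le_mul_of_nonneg_left hhk (by positivity)
        _ ≤ (θ j/θ n) * (B * (c j * θ n) / (k:ℝ)) := by
            apply mul_le_mul_of_nonneg_left _ (by positivity)
            apply div_le_div_of_nonneg_right _ hkpos.le
            nlinarith
        _ = (B * θ j * c j) / (k:ℝ) := by field_simp
        _ ≤ (2 * (B * θ j * c j)) / (n:ℝ) := by
            rw [div_le_div_iff₀ hkpos hnpos]
            have : 0 ≤ B * θ j * c j := by positivity
            nlinarith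
        _ = (2*B/(n:ℝ)) * (θ j * c j) := by field_simp
    calc R n ≤ ∑ k ∈ (Finset.range n).filter (fun k => ¬ 2*k ≤ n),
          (2*B/(n:ℝ)) * (θ (n-k) * c (n-k)) := by
          simp only [hR]; exact Finset.sum_le_sum hstep
      _ = (2*B/(n:ℝ)) * ∑ k ∈ (Finset.range n).filter (fun k => ¬ 2*k ≤ n),
          θ (n-k) * c (n-k) := by rw [Finset.mul_sum]
      _ ≤ (2*B/(n:ℝ)) * ∑ j ∈ Finset.Icc 1 n, θ j * c j := by
          apply mul_le_mul_of_nonneg_left _ (by positivity)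
          have hinj : ∀ x ∈ (Finset.range n).filter (fun k => ¬ 2*k ≤ n),
              ∀ y ∈ (Finset.range n).filter (fun k => ¬ 2*k ≤ n), n - x = n - y → x = y := by
            intro x hx y hy hxy
            rw [Finset.mem_filter, Finset.mem_range] at hx hy
            omega
          have himg : ∑ k ∈ (Finset.range n).filter (fun k => ¬ 2*k ≤ n), θ (n-k) * c (n-k)
              = ∑ j ∈ ((Finset.range n).filter (fun k => ¬ 2*k ≤ n)).image (fun k => n - k),
                  θ j * c j := by
            rw [Finset.sum_image hinj]
          rw [himg]
          apply Finset.sum_le_sum_of_subset_of_nonneg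
          · intro j hj
            rw [Finset.mem_image] at hj
            obtain ⟨k, hk, rfl⟩ := hj
            rw [Finset.mem_filter, Finset.mem_range] at hk
            rw [Finset.mem_Icc]
            omega
          · intro j hj _
            rw [Finset.mem_Icc] at hj
            have := hθ j hj.1; have := hgec j hj.1
            nlinarith
      _ = 2*B*((∑ j ∈ Finset.Icc 1 n, θ j * c j)/(n:ℝ)) := by field_simp
  have hR0 : Tendsto R atTop (nhds 0) := by
    have hkr := (kron (fun j => θ j * c j)
      (fun j hj => by show (0:ℝ) ≤ θ j * c j; nlinarith [hθ j hj, hgec j hj]) hsum).const_mul (2*B)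
    rw [mul_zero] at hkr
    apply squeeze_zero' (Eventually.of_forall hRnn) _ hkr
    filter_upwards [eventually_ge_atTop 1] with n hn
    exact hRle n hn
  -- combine
  have hcomb : Tendsto (fun n => (∑' k, f n k) + R n) atTop
      (nhds (∑' k, hcoef θ k)) := by
    have := htsum.add hR0
    rwa [add_zero] at this
  rw [tsum_hcoef_eq θ hθ hg] at hcomb
  apply hcomb.congr'
  filter_upwards [eventually_ge_atTop 1] with n hn1
  -- show (∑' k, f n k) + R n = n * hcoef θ n / θ n
  have hθn := hθ n hn1
  rw [hTn n]
  simp only [hR]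
  rw [Finset.sum_filter_add_sum_filter_not (Finset.range n) (fun k => 2*k ≤ n)
    (fun k => (θ (n-k)/θ n) * hcoef θ k)]
  -- now: Σ_{k ∈ range n} (θ(n-k)/θ n) h k = n h n / θ n
  have hrec := hcoef_rec θ n hn1
  have hreindex : ∑ k ∈ Finset.range n, (θ (n-k)/θ n) * hcoef θ k
      = ∑ j ∈ Finset.Icc 1 n, (θ j / θ n) * hcoef θ (n - j) := by
    apply Finset.sum_nbij' (i := fun k => n - k) (j := fun j => n - j)
    · intro k hk
      rw [Finset.mem_range] at hk
      rw [Finset.mem_Icc]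
      omega
    · intro j hj
      rw [Finset.mem_Icc] at hj
      rw [Finset.mem_range]
      omega
    · intro k hk
      rw [Finset.mem_range] at hk
      omega
    · intro j hj
      rw [Finset.mem_Icc] at hj
      omega
    · intro k hk
      rw [Finset.mem_range] at hk
      have : n - (n - k) = k := by omega
      rw [this]
  rw [hreindex]
  rw [eq_div_iff (ne_of_gt hθn), Finset.sum_mul]
  rw [hrec]
  apply Finset.sum_congr rfl
  intro j hj
  field_simp

end Spart
end
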